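/- arXiv:1506.02137 — 2 statements merged into one kernel-verified Lean document; each statement's English description precedes it below -/
import Mathlib

section
/- For every positive integer n and every real number u, the Bernoulli polynomial satisfies B_n(u) = \sum_{k=1}^n k! \sum_{r+s=k} \sum_{\ell+m=n} (-1)^m binom(n,\ell) * (\ell!/(\ell+r)!) * (m!/(m+s)!) * [\sum_{i=0}^r \sum_{j=0}^s (-1)^{i+j} binom(\ell+r, r-i) binom(m+s, s-j) S(\ell+i, i) S(m+j, j)] * u^{m+s} (1-u)^{\ell+r}. -/
open Nat

/-- Stirling numbers of the second kind. -/
def stirling2 : ℕ → ℕ → ℕ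
  | 0, 0 => 1
  | 0, _ + 1 => 0
  | _ + 1, 0 => 0
  | n + 1, k + 1 => (k + 1) * stirling2 n (k + 1) + stirling2 n k

open Finset

private def Tsum (N i : ℕ) : ℝ := ∑ j ∈ range (i+1), (-1:ℝ)^(i+j) * (i.choose j) * (j:ℝ)^N

private lemma Tsum_zero (i : ℕ) : Tsum 0 i = if i = 0 then 1 else 0 := by
  have h : Tsum 0 i = (-1:ℝ)^i * ∑ j ∈ range (i+1), (-1:ℝ)^j * (i.choose j) := by
    rw [Finset.mul_sum]
    refine Finset.sum_congr rfl fun j _ => ?_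
    rw [pow_zero, pow_add]; ring
  have h2 : (∑ j ∈ range (i+1), (-1:ℝ)^j * (i.choose j)) =
      ((∑ j ∈ range (i+1), (-1:ℤ)^j * (i.choose j) : ℤ) : ℝ) := by push_cast; rfl
  rw [h, h2, Int.alternating_sum_range_choose]
  rcases Nat.eq_zero_or_pos i with h | h
  · subst h; simp
  · rw [if_neg h.ne', if_neg h.ne']; simp

private lemma Tsum_succ (N i : ℕ) : Tsum (N+1) (i+1) = (i+1) * (Tsum N (i+1) + Tsum N i) := by
  set U : ℝ := ∑ j ∈ range (i+1), (-1:ℝ)^(i+j) * (i.choose j) * ((j:ℝ)+1)^N with hU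
  set S : ℝ := ∑ j ∈ range (i+1), (-1:ℝ)^(i+j) * (i.choose (j+1)) * ((j:ℝ)+1)^N with hS
  have step1 : Tsum (N+1) (i+1) = (i+1) * U := by
    rw [Tsum, Finset.sum_range_succ']
    have h0 : (-1:ℝ)^(i+1+0) * ((i+1).choose 0) * ((0:ℕ):ℝ)^(N+1) = 0 := by simp
    rw [h0, add_zero, hU, Finset.mul_sum]
    refine Finset.sum_congr rfl fun j hj => ?_
    have hc : ((i+1).choose (j+1)) * (j+1) = (i+1) * (i.choose j) := by
      rw [Nat.add_one_mul_choose_eq]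
    have hc' : (((i+1).choose (j+1)) : ℝ) * ((j:ℝ)+1) = ((i:ℝ)+1) * (i.choose j) := by
      have := congrArg (fun x : ℕ => (x : ℝ)) hc
      push_cast at this ⊢; linarith [this]
    have hsgn : (-1:ℝ)^(i+1+(j+1)) = (-1:ℝ)^(i+j) := by
      rw [show i+1+(j+1) = (i+j)+2 by ring, pow_add]; simp
    rw [hsgn]
    push_cast
    calc (-1:ℝ)^(i+j) * ((i+1).choose (j+1)) * ((j:ℝ)+1)^(N+1)
        = (-1:ℝ)^(i+j) * ((((i+1).choose (j+1)) : ℝ) * ((j:ℝ)+1)) * ((j:ℝ)+1)^N := by ring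
      _ = (-1:ℝ)^(i+j) * (((i:ℝ)+1) * (i.choose j)) * ((j:ℝ)+1)^N := by rw [hc']
      _ = ((i:ℝ)+1) * ((-1:ℝ)^(i+j) * (i.choose j) * ((j:ℝ)+1)^N) := by ring
  have hTS : Tsum N i + S = (-1:ℝ)^i * (0:ℝ)^N := by
    have key : Tsum N i + S
        = (-1:ℝ)^(i+0) * (i.choose 0) * ((0:ℕ):ℝ)^N
          + ∑ j ∈ range i, ((-1:ℝ)^(i+(j+1)) * (i.choose (j+1)) * (((j+1):ℕ):ℝ)^N
              + (-1:ℝ)^(i+j) * (i.choose (j+1)) * ((j:ℝ)+1)^N)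
          + (-1:ℝ)^(i+i) * (i.choose (i+1)) * ((i:ℝ)+1)^N := by
      rw [Tsum, Finset.sum_range_succ' (fun j => (-1:ℝ)^(i+j) * (i.choose j) * ((j:ℕ):ℝ)^N) i]
      rw [hS, Finset.sum_range_succ (fun j => (-1:ℝ)^(i+j) * (i.choose (j+1)) * ((j:ℝ)+1)^N) i]
      rw [Finset.sum_add_distrib]
      push_cast
      ring
    have cancel : ∀ j ∈ range i, ((-1:ℝ)^(i+(j+1)) * (i.choose (j+1)) * (((j+1):ℕ):ℝ)^N
              + (-1:ℝ)^(i+j) * (i.choose (j+1)) * ((j:ℝ)+1)^N) = 0 := by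
      intro j _
      have h1 : (-1:ℝ)^(i+(j+1)) = -(-1:ℝ)^(i+j) := by
        rw [show i+(j+1) = (i+j)+1 by ring, pow_succ]; ring
      rw [h1]; push_cast; ring
    rw [Finset.sum_congr rfl cancel] at key
    simp only [Finset.sum_const_zero, Nat.choose_succ_self, Nat.cast_zero, add_zero,
      Nat.choose_zero_right, Nat.cast_one, Nat.add_zero, mul_zero, zero_mul] at key
    rw [key]; ring
  have step2 : Tsum N (i+1) = U - Tsum N i := by
    rw [Tsum, Finset.sum_range_succ']
    have split : ∀ j ∈ range (i+1), (-1:ℝ)^(i+1+(j+1)) * ((i+1).choose (j+1)) * (((j+1):ℕ):ℝ)^N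
        = (-1:ℝ)^(i+j) * (i.choose j) * ((j:ℝ)+1)^N
          + (-1:ℝ)^(i+j) * (i.choose (j+1)) * ((j:ℝ)+1)^N := by
      intro j _
      have hsgn : (-1:ℝ)^(i+1+(j+1)) = (-1:ℝ)^(i+j) := by
        rw [show i+1+(j+1) = (i+j)+2 by ring, pow_add]; simp
      have pas : ((i+1).choose (j+1) : ℝ) = (i.choose j : ℝ) + (i.choose (j+1) : ℝ) := by
        rw [Nat.choose_succ_succ]; push_cast; ring
      rw [hsgn, pas]; push_cast; ring
    rw [Finset.sum_congr rfl split, Finset.sum_add_distrib]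
    have hneg : (-1:ℝ)^(i+1+0) * (((i+1).choose 0) : ℝ) * ((0:ℕ):ℝ)^N
        = -((-1:ℝ)^i * (0:ℝ)^N) := by
      simp only [Nat.add_zero, Nat.choose_zero_right, Nat.cast_one, Nat.cast_zero, pow_succ]
      ring
    rw [hneg, ← hU, ← hS]
    linarith [hTS]
  rw [step1, step2]; ring

private lemma Tsum_eq (N i : ℕ) : Tsum N i = (i ! : ℝ) * (stirling2 N i : ℝ) := by
  induction N generalizing i with
  | zero =>
    rw [Tsum_zero]
    cases i with
    | zero => simp [stirling2]
    | succ i => simp [stirling2]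
  | succ N ih =>
    cases i with
    | zero => simp [Tsum, stirling2]
    | succ i =>
      rw [Tsum_succ, ih, ih, stirling2]
      push_cast [Nat.factorial_succ]
      ring

private lemma Tsum_eq' (N i : ℕ) : (∑ j ∈ range (i+1), (-1:ℝ)^(i+j) * (i.choose j) * (j:ℝ)^N)
    = (i ! : ℝ) * (stirling2 N i : ℝ) := Tsum_eq N i

open PowerSeries

noncomputable def ψ : ℝ⟦X⟧ := exp ℝ - 1 - PowerSeries.X

lemma coeff_exp_pow (j N : ℕ) : coeff (R := ℝ) N ((exp ℝ)^j) = (j:ℝ)^N / N ! := by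
  rw [exp_pow_eq_rescale_exp, coeff_rescale, coeff_exp, eq_ratCast]
  push_cast
  ring

lemma coeff_exp_sub_one_pow (i N : ℕ) :
    coeff (R := ℝ) N ((exp ℝ - 1)^i) = (i ! : ℝ) * (stirling2 N i : ℝ) / N ! := by
  rw [sub_pow, map_sum]
  have : ∀ m ∈ range (i+1), coeff (R := ℝ) N ((-1:ℝ⟦X⟧)^(m+i) * (exp ℝ)^m * 1^(i-m) * (i.choose m : ℕ))
      = (-1:ℝ)^(i+m) * (i.choose m) * (m:ℝ)^N / N ! := by
    intro m _
    rw [one_pow, mul_one]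
    calc coeff (R := ℝ) N ((-1:ℝ⟦X⟧)^(m+i) * (exp ℝ)^m * (i.choose m : ℕ))
        = coeff (R := ℝ) N ((((-1:ℝ)^(i+m) * (i.choose m : ℝ))) • (exp ℝ)^m) := by
          congr 1
          rw [smul_eq_C_mul, map_mul, map_pow, map_neg, map_one, map_natCast,
            show i + m = m + i from add_comm i m]
          ring
      _ = (-1:ℝ)^(i+m) * (i.choose m : ℝ) * coeff (R := ℝ) N ((exp ℝ)^m) := by
          rw [map_smul, smul_eq_mul]
      _ = (-1:ℝ)^(i+m) * (i.choose m) * (m:ℝ)^N / N ! := by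
          rw [coeff_exp_pow]; ring
  rw [Finset.sum_congr rfl this, ← Finset.sum_div, Tsum_eq']

lemma coeff_psi_pow (l r : ℕ) : coeff (R := ℝ) (l+r) (ψ^r)
    = ∑ i ∈ range (r+1), (-1:ℝ)^(r+i) * (r.choose i : ℝ) *
        ((i ! : ℝ) * (stirling2 (l+i) i : ℝ)) / ((l+i)! : ℝ) := by
  rw [ψ, sub_pow, map_sum]
  refine Finset.sum_congr rfl fun i hi => ?_
  have hir : i ≤ r := Nat.lt_succ_iff.mp (Finset.mem_range.mp hi)
  have hidx : l + r - (r - i) = l + i := by omega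
  calc coeff (R := ℝ) (l+r) ((-1:ℝ⟦X⟧)^(i+r) * (exp ℝ - 1)^i * X^(r-i) * ((r.choose i : ℕ) : ℝ⟦X⟧))
      = coeff (R := ℝ) (l+r) ((((-1:ℝ)^(r+i) * (r.choose i : ℝ))) • ((exp ℝ - 1)^i * X^(r-i))) := by
        congr 1
        rw [smul_eq_C_mul, map_mul, map_pow, map_neg, map_one, map_natCast,
          show r + i = i + r from add_comm r i]
        push_cast
        ring
    _ = (-1:ℝ)^(r+i) * (r.choose i : ℝ) * coeff (R := ℝ) (l+i) ((exp ℝ - 1)^i) := by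
        rw [map_smul, smul_eq_mul, coeff_mul_X_pow', if_pos (by omega : r - i ≤ l + r), hidx]
    _ = (-1:ℝ)^(r+i) * (r.choose i : ℝ) * ((i ! : ℝ) * (stirling2 (l+i) i : ℝ)) / ((l+i)! : ℝ) := by
        rw [coeff_exp_sub_one_pow]; ring

lemma single_bracket (l r : ℕ) :
    (∑ i ∈ range (r+1), (-1:ℝ)^i * ((l+r).choose (r-i) : ℝ) * (stirling2 (l+i) i : ℝ))
      = (-1:ℝ)^r * (((l+r)! : ℝ) / (r ! : ℝ)) * coeff (R := ℝ) (l+r) (ψ^r) := by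
  rw [coeff_psi_pow, Finset.mul_sum]
  refine Finset.sum_congr rfl fun i hi => ?_
  have hir : i ≤ r := Nat.lt_succ_iff.mp (Finset.mem_range.mp hi)
  have h1 : ((l+r).choose (r-i) : ℝ) = ((l+r)! : ℝ) / (((r-i)! : ℝ) * ((l+i)! : ℝ)) := by
    rw [Nat.cast_choose ℝ (by omega : r - i ≤ l + r),
      show l + r - (r - i) = l + i from by omega]
  have h2 : (r.choose i : ℝ) = (r ! : ℝ) / ((i ! : ℝ) * ((r-i)! : ℝ)) := by
    rw [Nat.cast_choose ℝ hir]
  have hsgn : (-1:ℝ)^r * (-1:ℝ)^(r+i) = (-1:ℝ)^i := by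
    rw [pow_add, ← mul_assoc, ← pow_add, ← two_mul, pow_mul]
    simp
  rw [h1, h2]
  have f1 : ((r-i)! : ℝ) ≠ 0 := Nat.cast_ne_zero.mpr (Nat.factorial_ne_zero _)
  have f2 : ((l+i)! : ℝ) ≠ 0 := Nat.cast_ne_zero.mpr (Nat.factorial_ne_zero _)
  have f3 : ((i)! : ℝ) ≠ 0 := Nat.cast_ne_zero.mpr (Nat.factorial_ne_zero _)
  have f4 : ((r)! : ℝ) ≠ 0 := Nat.cast_ne_zero.mpr (Nat.factorial_ne_zero _)
  field_simp
  linear_combination (-(stirling2 (l+i) i : ℝ)) * hsgn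

noncomputable def Wser (u : ℝ) : ℝ⟦X⟧ := rescale (1-u) ψ - rescale (-u) ψ

lemma X_dvd_psi : (X : ℝ⟦X⟧) ∣ ψ := by
  rw [X_dvd_iff, ψ]
  simp [constantCoeff_exp]

lemma X_sq_dvd_psi : (X : ℝ⟦X⟧)^2 ∣ ψ := by
  rw [X_pow_dvd_iff]
  intro m hm
  interval_cases m
  · simp [ψ, constantCoeff_exp]
  · simp [ψ, coeff_exp, coeff_one]

lemma coeff_psi_pow_eq_zero {a r : ℕ} (h : a < r) : coeff (R := ℝ) a (ψ^r) = 0 := by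
  have : (X : ℝ⟦X⟧)^r ∣ ψ^r := pow_dvd_pow_of_dvd X_dvd_psi r
  exact X_pow_dvd_iff.mp this a h

lemma X_sq_dvd_rescale_psi (a : ℝ) : (X:ℝ⟦X⟧)^2 ∣ rescale a ψ := by
  refine dvd_trans ?_ (map_dvd (rescale a) X_sq_dvd_psi)
  rw [map_pow, rescale_X, mul_pow]
  exact dvd_mul_left _ _

lemma X_sq_dvd_W (u : ℝ) : (X : ℝ⟦X⟧)^2 ∣ Wser u :=
  dvd_sub (X_sq_dvd_rescale_psi _) (X_sq_dvd_rescale_psi _)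

noncomputable def Bser (u : ℝ) : ℝ⟦X⟧ :=
  PowerSeries.mk fun n => Polynomial.aeval u ((1 / n ! : ℚ) • Polynomial.bernoulli n)

lemma X_add_W (u : ℝ) : (X : ℝ⟦X⟧) + Wser u = rescale (1-u) (exp ℝ) - rescale (-u) (exp ℝ) := by
  rw [Wser, ψ]
  simp only [map_sub, map_one, map_neg, rescale_X]
  ring

lemma key1 (u : ℝ) : Bser u * ((X : ℝ⟦X⟧) + Wser u) = (X : ℝ⟦X⟧) := by
  rw [X_add_W]
  have gen := Polynomial.bernoulli_generating_function u
  have factored : rescale (1-u) (exp ℝ) - rescale (-u) (exp ℝ)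
      = (exp ℝ - 1) * rescale (-u) (exp ℝ) := by
    rw [sub_mul, one_mul]
    congr 1
    rw [show exp ℝ * rescale (-u) (exp ℝ) = rescale 1 (exp ℝ) * rescale (-u) (exp ℝ) from by
        rw [rescale_one]; rfl,
      exp_mul_exp_eq_exp_add, show (1:ℝ) + -u = 1 - u from by ring]
  rw [factored, ← mul_assoc, Bser, gen, mul_assoc, exp_mul_exp_eq_exp_add]
  rw [show u + -u = 0 from by ring, rescale_zero]
  simp [constantCoeff_exp]

lemma key2 (u : ℝ) (n : ℕ) :
    coeff (R := ℝ) n (Bser u) = ∑ k ∈ range (n+1), (-1:ℝ)^k * coeff (R := ℝ) (n+k) ((Wser u)^k) := by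
  have geom := geom_sum₂_mul (-(Wser u)) (X : ℝ⟦X⟧) (n+1)
  set T : ℝ⟦X⟧ := ∑ i ∈ range (n+1), (-(Wser u))^i * (X:ℝ⟦X⟧)^(n+1-1-i) with hT
  have h2 : -((X:ℝ⟦X⟧)*T) = Bser u * (-(Wser u))^(n+1) - Bser u * (X:ℝ⟦X⟧)^(n+1) := by
    calc -((X:ℝ⟦X⟧)*T) = -(Bser u * ((X : ℝ⟦X⟧) + Wser u)) * T := by rw [key1]; ring
      _ = Bser u * (T * (-(Wser u) - X)) := by ring
      _ = Bser u * ((-(Wser u))^(n+1) - (X:ℝ⟦X⟧)^(n+1)) := by rw [geom]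
      _ = Bser u * (-(Wser u))^(n+1) - Bser u * (X:ℝ⟦X⟧)^(n+1) := by ring
  have main : (X:ℝ⟦X⟧) * T = Bser u * (X:ℝ⟦X⟧)^(n+1) - Bser u * (-(Wser u))^(n+1) := by
    linear_combination -h2
  have cm := congrArg (fun f => coeff (R := ℝ) (2*n+1) f) main
  -- LHS of cm
  have lhs_eq : coeff (R := ℝ) (2*n+1) ((X:ℝ⟦X⟧) * T)
      = ∑ k ∈ range (n+1), (-1:ℝ)^k * coeff (R := ℝ) (n+k) ((Wser u)^k) := by
    rw [show 2*n+1 = (2*n)+1 from rfl, coeff_succ_X_mul, hT, map_sum]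
    refine Finset.sum_congr rfl fun k hk => ?_
    have hkn : k ≤ n := Nat.lt_succ_iff.mp (Finset.mem_range.mp hk)
    rw [show n+1-1-k = n-k from by omega, neg_pow, mul_assoc,
      show ((-1:ℝ⟦X⟧)^k * ((Wser u)^k * (X:ℝ⟦X⟧)^(n-k))) =
        (((-1:ℝ)^k) • ((Wser u)^k * (X:ℝ⟦X⟧)^(n-k))) from by
          rw [smul_eq_C_mul, map_pow, map_neg, map_one],
      map_smul, smul_eq_mul, coeff_mul_X_pow', if_pos (by omega : n - k ≤ 2*n),
      show 2*n - (n-k) = n+k from by omega]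
  have rhs1 : coeff (R := ℝ) (2*n+1) (Bser u * (X:ℝ⟦X⟧)^(n+1)) = coeff (R := ℝ) n (Bser u) := by
    rw [show 2*n+1 = n + (n+1) from by omega, coeff_mul_X_pow]
  have rhs2 : coeff (R := ℝ) (2*n+1) (Bser u * (-(Wser u))^(n+1)) = 0 := by
    have hdvd : (X:ℝ⟦X⟧)^(2*(n+1)) ∣ Bser u * (-(Wser u))^(n+1) := by
      have h1 : (X:ℝ⟦X⟧)^(2*(n+1)) ∣ (Wser u)^(n+1) := by
        rw [show (X:ℝ⟦X⟧)^(2*(n+1)) = ((X:ℝ⟦X⟧)^2)^(n+1) from by rw [← pow_mul]]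
        exact pow_dvd_pow_of_dvd (X_sq_dvd_W u) (n+1)
      have h2 : (Wser u)^(n+1) ∣ Bser u * (-(Wser u))^(n+1) := by
        rw [neg_pow]
        exact Dvd.dvd.mul_left (dvd_mul_left _ _) _
      exact h1.trans h2
    exact X_pow_dvd_iff.mp hdvd (2*n+1) (by omega)
  rw [lhs_eq, map_sub, rhs1, rhs2, sub_zero] at cm
  exact cm.symm

lemma antidiag_shrink (u : ℝ) (n r s : ℕ) :
    ∑ ab ∈ Finset.HasAntidiagonal.antidiagonal (n+(r+s)),
        ((1-u)^ab.1 * coeff (R := ℝ) ab.1 (ψ^r)) * ((-u)^ab.2 * coeff (R := ℝ) ab.2 (ψ^s))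
      = ∑ lm ∈ Finset.HasAntidiagonal.antidiagonal n,
        ((1-u)^(lm.1+r) * coeff (R := ℝ) (lm.1+r) (ψ^r)) * ((-u)^(lm.2+s) * coeff (R := ℝ) (lm.2+s) (ψ^s)) := by
  rw [Finset.Nat.sum_antidiagonal_eq_sum_range_succ_mk, Finset.Nat.sum_antidiagonal_eq_sum_range_succ_mk]
  set F : ℕ → ℝ := fun a =>
    ((1-u)^a * coeff (R := ℝ) a (ψ^r)) * ((-u)^(n+(r+s)-a) * coeff (R := ℝ) (n+(r+s)-a) (ψ^s)) with hF
  have himg : (Finset.range (n+1)).image (· + r) ⊆ Finset.range (n+(r+s)+1) := by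
    intro a ha
    simp only [Finset.mem_image, Finset.mem_range] at ha ⊢
    obtain ⟨l, hl, rfl⟩ := ha
    omega
  have hzero : ∀ a ∈ Finset.range (n+(r+s)+1), a ∉ (Finset.range (n+1)).image (· + r) → F a = 0 := by
    intro a ha hna
    simp only [Finset.mem_image, Finset.mem_range] at ha hna
    rcases lt_or_ge a r with h | h
    · rw [hF]
      simp only [coeff_psi_pow_eq_zero h]
      ring
    · have h2 : n + (r+s) - a < s := by
        rcases lt_or_ge a (n+r+1) with h3 | h3
        · exact absurd ⟨a - r, by omega, by omega⟩ hna
        · omega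
      rw [hF]
      simp only [coeff_psi_pow_eq_zero h2]
      ring
  have step1 : ∑ a ∈ Finset.range (n+(r+s)+1), F a
      = ∑ a ∈ (Finset.range (n+1)).image (· + r), F a := (Finset.sum_subset himg hzero).symm
  have step2 : ∑ a ∈ (Finset.range (n+1)).image (· + r), F a
      = ∑ l ∈ Finset.range (n+1), F (l + r) :=
    Finset.sum_image (by intro x _ y _ h; simp only at h; omega)
  have step3 : ∀ l ∈ Finset.range (n+1), F (l + r)
      = ((1-u)^(l+r) * coeff (R := ℝ) (l+r) (ψ^r)) * ((-u)^((n-l)+s) * coeff (R := ℝ) ((n-l)+s) (ψ^s)) := by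
    intro l hl
    simp only [Finset.mem_range] at hl
    rw [hF]
    simp only []
    rw [show n + (r+s) - (l+r) = (n-l) + s from by omega]
  calc ∑ a ∈ Finset.range (n+(r+s)+1), F a
      = ∑ a ∈ (Finset.range (n+1)).image (· + r), F a := step1
    _ = ∑ l ∈ Finset.range (n+1), F (l + r) := step2
    _ = ∑ l ∈ Finset.range (n+1), ((1-u)^(l+r) * coeff (R := ℝ) (l+r) (ψ^r)) *
          ((-u)^((n-l)+s) * coeff (R := ℝ) ((n-l)+s) (ψ^s)) := Finset.sum_congr rfl step3

lemma coeff_W_pow (u : ℝ) (n k : ℕ) :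
    coeff (R := ℝ) (n+k) ((Wser u)^k)
      = ∑ r ∈ Finset.range (k+1), (-1:ℝ)^(r+k) * (k.choose r : ℝ) *
          ∑ lm ∈ Finset.HasAntidiagonal.antidiagonal n,
            ((1-u)^(lm.1+r) * coeff (R := ℝ) (lm.1+r) (ψ^r)) *
            ((-u)^(lm.2+(k-r)) * coeff (R := ℝ) (lm.2+(k-r)) (ψ^(k-r))) := by
  rw [Wser, sub_pow, map_sum]
  refine Finset.sum_congr rfl fun r hr => ?_
  have hrk : r ≤ k := Nat.lt_succ_iff.mp (Finset.mem_range.mp hr)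
  calc coeff (R := ℝ) (n+k) ((-1:ℝ⟦X⟧)^(r+k) * (rescale (1-u) ψ)^r * (rescale (-u) ψ)^(k-r)
          * ((k.choose r : ℕ) : ℝ⟦X⟧))
      = coeff (R := ℝ) (n+k) (((-1:ℝ)^(r+k) * (k.choose r : ℝ)) •
          (rescale (1-u) (ψ^r) * rescale (-u) (ψ^(k-r)))) := by
        congr 1
        rw [smul_eq_C_mul, map_mul, map_pow, map_neg, map_one, map_natCast, map_pow, map_pow]
        push_cast
        ring
    _ = (-1:ℝ)^(r+k) * (k.choose r : ℝ) *
          coeff (R := ℝ) (n+k) (rescale (1-u) (ψ^r) * rescale (-u) (ψ^(k-r))) := by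
        rw [map_smul, smul_eq_mul]
    _ = (-1:ℝ)^(r+k) * (k.choose r : ℝ) *
          ∑ lm ∈ Finset.HasAntidiagonal.antidiagonal n,
            ((1-u)^(lm.1+r) * coeff (R := ℝ) (lm.1+r) (ψ^r)) *
            ((-u)^(lm.2+(k-r)) * coeff (R := ℝ) (lm.2+(k-r)) (ψ^(k-r))) := by
        rw [coeff_mul]
        simp_rw [coeff_rescale]
        rw [show n + k = n + (r + (k-r)) from by omega, antidiag_shrink]

theorem bernoulliPolynomial_eq_sum_stirling (n : ℕ) (hn : 0 < n) (u : ℝ) :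
    Polynomial.eval u ((Polynomial.bernoulli n).map (algebraMap ℚ ℝ)) =
      ∑ k ∈ Finset.Icc 1 n, (k ! : ℝ) *
        ∑ rs ∈ Finset.HasAntidiagonal.antidiagonal k, ∑ lm ∈ Finset.HasAntidiagonal.antidiagonal n,
          (-1 : ℝ) ^ lm.2 * (n.choose lm.1 : ℝ) *
            ((lm.1 ! : ℝ) / ((lm.1 + rs.1)! : ℝ)) * ((lm.2 ! : ℝ) / ((lm.2 + rs.2)! : ℝ)) *
            (∑ i ∈ Finset.range (rs.1 + 1), ∑ j ∈ Finset.range (rs.2 + 1),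
              (-1 : ℝ) ^ (i + j) * ((lm.1 + rs.1).choose (rs.1 - i) : ℝ) *
                ((lm.2 + rs.2).choose (rs.2 - j) : ℝ) *
                (stirling2 (lm.1 + i) i : ℝ) * (stirling2 (lm.2 + j) j : ℝ)) *
            u ^ (lm.2 + rs.2) * (1 - u) ^ (lm.1 + rs.1) := by
  have hL : Polynomial.eval u ((Polynomial.bernoulli n).map (algebraMap ℚ ℝ))
      = (n ! : ℝ) * coeff (R := ℝ) n (Bser u) := by
    rw [Bser, coeff_mk, map_smul, Polynomial.eval_map, ← Polynomial.aeval_def, Rat.smul_def]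
    push_cast
    rw [← mul_assoc, mul_one_div, div_self (Nat.cast_ne_zero.mpr (Nat.factorial_ne_zero n)),
      one_mul]
  rw [hL, key2, show Finset.range (n+1) = insert 0 (Finset.Icc 1 n) from by ext x; simp; omega,
    Finset.sum_insert (by simp)]
  have h0 : (-1:ℝ)^0 * coeff (R := ℝ) (n+0) ((Wser u)^0) = 0 := by
    simp [PowerSeries.coeff_one, hn.ne']
  rw [h0, zero_add, Finset.mul_sum]
  refine Finset.sum_congr rfl fun k hk => ?_
  rw [coeff_W_pow]
  rw [Finset.Nat.sum_antidiagonal_eq_sum_range_succ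
    (f := fun r s => ∑ lm ∈ Finset.HasAntidiagonal.antidiagonal n,
      (-1 : ℝ) ^ lm.2 * (n.choose lm.1 : ℝ) *
        ((lm.1 ! : ℝ) / ((lm.1 + r)! : ℝ)) * ((lm.2 ! : ℝ) / ((lm.2 + s)! : ℝ)) *
        (∑ i ∈ Finset.range (r + 1), ∑ j ∈ Finset.range (s + 1),
          (-1 : ℝ) ^ (i + j) * ((lm.1 + r).choose (r - i) : ℝ) *
            ((lm.2 + s).choose (s - j) : ℝ) *
            (stirling2 (lm.1 + i) i : ℝ) * (stirling2 (lm.2 + j) j : ℝ)) *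
        u ^ (lm.2 + s) * (1 - u) ^ (lm.1 + r)) (n := k)]
  rw [Finset.mul_sum, Finset.mul_sum]
  rw [Finset.mul_sum]
  refine Finset.sum_congr rfl ?_
  intro r hr
  have hrk : r ≤ k := Nat.lt_succ_iff.mp (Finset.mem_range.mp hr)
  have hkk : (-1:ℝ)^k * (-1:ℝ)^k = 1 := by
    rw [← pow_add, ← two_mul, pow_mul, neg_one_sq, one_pow]
  have gen : ∀ S : ℝ, (n ! : ℝ) * ((-1:ℝ)^k * ((-1:ℝ)^(r+k) * (k.choose r : ℝ) * S))
      = (-1:ℝ)^r * ((n ! : ℝ) * ((k.choose r : ℝ) * S)) := by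
    intro S
    calc (n ! : ℝ) * ((-1:ℝ)^k * ((-1:ℝ)^(r+k) * (k.choose r : ℝ) * S))
        = ((-1:ℝ)^k * (-1:ℝ)^k) * ((-1:ℝ)^r * ((n ! : ℝ) * ((k.choose r : ℝ) * S))) := by
          rw [pow_add]; ring
      _ = (-1:ℝ)^r * ((n ! : ℝ) * ((k.choose r : ℝ) * S)) := by rw [hkk, one_mul]
  rw [gen, Finset.mul_sum, Finset.mul_sum, Finset.mul_sum, Finset.mul_sum]
  refine Finset.sum_congr rfl fun lm hlm => ?_
  have hlmn : lm.1 + lm.2 = n := Finset.HasAntidiagonal.mem_antidiagonal.mp hlm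
  -- bracket factorization
  have hbr : (∑ i ∈ Finset.range (r + 1), ∑ j ∈ Finset.range ((k-r) + 1),
        (-1 : ℝ) ^ (i + j) * ((lm.1 + r).choose (r - i) : ℝ) *
          ((lm.2 + (k-r)).choose ((k-r) - j) : ℝ) *
          (stirling2 (lm.1 + i) i : ℝ) * (stirling2 (lm.2 + j) j : ℝ))
      = ((-1:ℝ)^r * (((lm.1+r)! : ℝ) / (r ! : ℝ)) * coeff (R := ℝ) (lm.1+r) (ψ^r)) *
        ((-1:ℝ)^(k-r) * (((lm.2+(k-r))! : ℝ) / ((k-r)! : ℝ)) * coeff (R := ℝ) (lm.2+(k-r)) (ψ^(k-r))) := by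
    rw [← single_bracket, ← single_bracket, Finset.sum_mul_sum]
    exact Finset.sum_congr rfl fun i _ => Finset.sum_congr rfl fun j _ => by
      rw [pow_add]; ring
  rw [hbr]
  -- now pure scalar identity
  have hln : lm.1 ≤ n := by omega
  have hckr : (k.choose r : ℝ) = (k ! : ℝ) / ((r ! : ℝ) * ((k-r)! : ℝ)) := Nat.cast_choose ℝ hrk
  have hcnl : (n.choose lm.1 : ℝ) = (n ! : ℝ) / ((lm.1 ! : ℝ) * ((lm.2)! : ℝ)) := by
    rw [Nat.cast_choose ℝ hln, show n - lm.1 = lm.2 from by omega]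
  rw [hckr, hcnl, neg_pow, pow_add]
  have f0 : ∀ m : ℕ, ((m)! : ℝ) ≠ 0 := fun m => Nat.cast_ne_zero.mpr (Nat.factorial_ne_zero m)
  field_simp
  ring
end

section
/- For every positive integer n, \sum_{i=1}^{n} (-1)^i * (binom(n+1, i+1) / binom(n+i, i)) * S(n+i, i) equals 0 whenever n is odd and n \ge 3. -/
open Finset PowerSeries

lemma key_choose (k j : ℕ) :
    (j : ℚ) * ((k+1).choose j : ℚ) = (k+1) * (((k+1).choose j : ℚ) - (k.choose j : ℚ)) := by
  cases j with
  | zero => simp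
  | succ jj =>
    have h1 : (k+1).choose (jj+1) = k.choose jj + k.choose (jj+1) := Nat.choose_succ_succ k jj
    have h2 : (k+1) * k.choose jj = (k+1).choose (jj+1) * (jj+1) := Nat.add_one_mul_choose_eq k jj
    have h1' : (((k+1).choose (jj+1) : ℕ) : ℚ) = (k.choose jj : ℚ) + (k.choose (jj+1) : ℚ) := by
      exact_mod_cast congrArg (Nat.cast : ℕ → ℚ) h1
    have h2' : ((k:ℚ)+1) * (k.choose jj : ℚ) = ((k+1).choose (jj+1) : ℚ) * ((jj:ℚ)+1) := by
      exact_mod_cast congrArg (Nat.cast : ℕ → ℚ) h2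
    push_cast
    push_cast at h1' h2'
    linear_combination (-((k:ℚ)+1)) * h1' - h2'

lemma stirling2_sum (n k : ℕ) :
    ∑ j ∈ range (k+1), (-1:ℚ)^(k+j) * (k.choose j : ℚ) * (j:ℚ)^n
      = (stirling2 n k : ℚ) * (k.factorial : ℚ) := by
  induction n generalizing k with
  | zero =>
    have h := Int.alternating_sum_range_choose (n := k)
    have h' : ∑ j ∈ range (k+1), (-1:ℚ)^j * (k.choose j : ℚ) = if k = 0 then 1 else 0 := by
      exact_mod_cast congrArg (Int.cast : ℤ → ℚ) h
    have : ∑ j ∈ range (k+1), (-1:ℚ)^(k+j) * (k.choose j : ℚ) * (j:ℚ)^0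
        = (-1:ℚ)^k * ∑ j ∈ range (k+1), (-1:ℚ)^j * (k.choose j : ℚ) := by
      rw [mul_sum]
      refine sum_congr rfl fun j _ => ?_
      rw [pow_add]; ring
    rw [this, h']
    cases k with
    | zero => simp [stirling2]
    | succ k => simp [stirling2]
  | succ n ih =>
    cases k with
    | zero => simp [stirling2]
    | succ k =>
      have hterm : ∀ j ∈ range (k+2),
          (-1:ℚ)^(k+1+j) * ((k+1).choose j : ℚ) * (j:ℚ)^(n+1)
          = ((k:ℚ)+1) * ((-1:ℚ)^(k+1+j) * ((k+1).choose j : ℚ) * (j:ℚ)^n)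
            + ((k:ℚ)+1) * (-((-1:ℚ)^(k+1+j)) * (k.choose j : ℚ) * (j:ℚ)^n) := by
        intro j _
        have := key_choose k j
        calc (-1:ℚ)^(k+1+j) * ((k+1).choose j : ℚ) * (j:ℚ)^(n+1)
            = (-1:ℚ)^(k+1+j) * ((j:ℚ) * ((k+1).choose j : ℚ)) * (j:ℚ)^n := by ring
          _ = (-1:ℚ)^(k+1+j) * (((k:ℚ)+1) * (((k+1).choose j : ℚ) - (k.choose j : ℚ))) * (j:ℚ)^n := by
              rw [this]
          _ = _ := by ring
      rw [sum_congr rfl hterm, sum_add_distrib, ← mul_sum, ← mul_sum]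
      have hA : ∑ j ∈ range (k+2), (-1:ℚ)^(k+1+j) * ((k+1).choose j : ℚ) * (j:ℚ)^n
          = (stirling2 n (k+1) : ℚ) * ((k+1).factorial : ℚ) := ih (k+1)
      have hB : ∑ j ∈ range (k+2), -((-1:ℚ)^(k+1+j)) * (k.choose j : ℚ) * (j:ℚ)^n
          = (stirling2 n k : ℚ) * (k.factorial : ℚ) := by
        rw [sum_range_succ]
        have hlast : -((-1:ℚ)^(k+1+(k+1))) * (k.choose (k+1) : ℚ) * ((k+1:ℕ):ℚ)^n = 0 := by
          simp [Nat.choose_eq_zero_of_lt (Nat.lt_succ_self k)]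
        rw [hlast, add_zero]
        rw [← ih k]
        refine sum_congr rfl fun j _ => ?_
        have : -((-1:ℚ)^(k+1+j)) = (-1:ℚ)^(k+j) := by
          rw [show k+1+j = (k+j)+1 by ring, pow_succ]; ring
        rw [this]
      rw [hA, hB]
      show _ = ((((k+1) * stirling2 n (k+1) + stirling2 n k : ℕ)) : ℚ) * ((k+1).factorial : ℚ)
      push_cast [Nat.factorial_succ]
      ring

lemma coeff_exp_sub_one_pow_s15 (k m : ℕ) :
    (PowerSeries.coeff m) ((PowerSeries.exp ℚ - 1)^k)
      = (stirling2 m k : ℚ) * (k.factorial : ℚ) / (m.factorial : ℚ) := by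
  rw [sub_pow]
  have hterm : ∀ j, ((-1 : ℚ⟦X⟧)^(j+k) * (PowerSeries.exp ℚ)^j * 1^(k-j) * ((k.choose j : ℕ) : ℚ⟦X⟧))
      = ((-1:ℚ)^(k+j) * (k.choose j : ℚ)) • ((PowerSeries.exp ℚ)^j) := by
    intro j
    rw [one_pow, mul_one, PowerSeries.smul_eq_C_mul, map_mul, map_pow, map_neg, map_one,
      map_natCast, add_comm k j]
    ring
  simp only [hterm]
  rw [map_sum]
  have hc : ∀ j, (PowerSeries.coeff m) (((-1:ℚ)^(k+j) * (k.choose j : ℚ)) • ((PowerSeries.exp ℚ)^j))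
      = (-1:ℚ)^(k+j) * (k.choose j : ℚ) * ((j:ℚ)^m * (1/(m.factorial : ℚ))) := by
    intro j
    rw [map_smul, smul_eq_mul, exp_pow_eq_rescale_exp, coeff_rescale, coeff_exp]
    simp [Algebra.algebraMap_self]
  simp only [hc]
  have : ∑ j ∈ range (k+1), (-1:ℚ)^(k+j) * (k.choose j : ℚ) * ((j:ℚ)^m * (1/(m.factorial : ℚ)))
      = (∑ j ∈ range (k+1), (-1:ℚ)^(k+j) * (k.choose j : ℚ) * (j:ℚ)^m) * (1/(m.factorial : ℚ)) := by
    rw [sum_mul]; exact sum_congr rfl fun j _ => by ring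
  rw [this, stirling2_sum]
  ring

noncomputable def Eser : PowerSeries ℚ := PowerSeries.mk fun n => (1:ℚ) / ((n+1).factorial : ℚ)

lemma exp_sub_one_eq : PowerSeries.exp ℚ - 1 = PowerSeries.X * Eser := by
  ext n
  cases n with
  | zero =>
    simp [PowerSeries.coeff_exp, Eser]
  | succ n =>
    rw [PowerSeries.coeff_succ_X_mul]
    simp [PowerSeries.coeff_exp, Eser, Nat.factorial_succ, Algebra.algebraMap_self,
      PowerSeries.coeff_one, Nat.succ_ne_zero]

lemma B_mul_E : bernoulliPowerSeries ℚ * Eser = 1 := by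
  have h := bernoulliPowerSeries_mul_exp_sub_one ℚ
  rw [exp_sub_one_eq] at h
  have h2 : (PowerSeries.X : ℚ⟦X⟧) * (bernoulliPowerSeries ℚ * Eser) = PowerSeries.X * 1 := by
    rw [mul_one]
    calc (PowerSeries.X : ℚ⟦X⟧) * (bernoulliPowerSeries ℚ * Eser)
        = bernoulliPowerSeries ℚ * (PowerSeries.X * Eser) := by ring
      _ = PowerSeries.X := h
  exact mul_left_cancel₀ PowerSeries.X_ne_zero h2

lemma coeff_E_pow (n i : ℕ) :
    (PowerSeries.coeff n) (Eser ^ i)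
      = (stirling2 (n+i) i : ℚ) * (i.factorial : ℚ) / ((n+i).factorial : ℚ) := by
  have h1 : (PowerSeries.exp ℚ - 1)^i = PowerSeries.X^i * Eser^i := by
    rw [exp_sub_one_eq, mul_pow]
  have h2 := coeff_exp_sub_one_pow_s15 i (n+i)
  rw [h1, PowerSeries.coeff_X_pow_mul] at h2
  exact h2

theorem sum_stirling_eq_zero_of_odd (n : ℕ) (hn : Odd n) (hn3 : 3 ≤ n) :
    ∑ i ∈ Finset.Icc 1 n,
        (-1 : ℚ) ^ i * (((n + 1).choose (i + 1) : ℚ) / ((n + i).choose i : ℚ)) *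
          (stirling2 (n + i) i : ℚ) = 0 := by
  classical
  set c : ℕ → ℚ := fun i => (-1:ℚ)^i * ((n+1).choose (i+1) : ℚ) with hc
  set G : ℚ⟦X⟧ := ∑ i ∈ Finset.Icc 1 n, c i • Eser ^ i with hG
  set G₀ : ℚ⟦X⟧ := ∑ i ∈ range (n+1), c i • Eser ^ i with hG0def
  have hnfac : (n.factorial : ℚ) ≠ 0 := Nat.cast_ne_zero.2 n.factorial_ne_zero
  -- Step A : each summand
  have hsummand : ∀ i ∈ Finset.Icc 1 n,
      (-1 : ℚ) ^ i * (((n + 1).choose (i + 1) : ℚ) / ((n + i).choose i : ℚ)) *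
          (stirling2 (n + i) i : ℚ)
        = (n.factorial : ℚ) * ((PowerSeries.coeff n) (c i • Eser ^ i)) := by
    intro i _
    rw [map_smul, smul_eq_mul, coeff_E_pow]
    have hch : (((n+i).choose i : ℕ) : ℚ)
        = ((n+i).factorial : ℚ) / ((i.factorial : ℚ) * (n.factorial : ℚ)) := by
      rw [Nat.cast_choose ℚ (Nat.le_add_left i n)]
      congr 2
      rw [Nat.add_sub_cancel]
    rw [hch, hc]
    have f1 : (i.factorial : ℚ) ≠ 0 := Nat.cast_ne_zero.2 i.factorial_ne_zero
    have f2 : ((n+i).factorial : ℚ) ≠ 0 := Nat.cast_ne_zero.2 (n+i).factorial_ne_zero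
    field_simp
  rw [Finset.sum_congr rfl hsummand, ← Finset.mul_sum, ← map_sum, ← hG]
  -- Step B : coeff n G = coeff n G₀
  have hins : range (n+1) = insert 0 (Finset.Icc 1 n) := by
    ext x
    simp only [Finset.mem_range, Finset.mem_insert, Finset.mem_Icc]
    omega
  have hGG0 : (PowerSeries.coeff n) G₀ = (PowerSeries.coeff n) G := by
    rw [hG0def, hins, Finset.sum_insert (by simp), hG]
    rw [map_add, map_smul]
    have : (PowerSeries.coeff n) (Eser ^ 0) = 0 := by
      rw [pow_zero, PowerSeries.coeff_one, if_neg (by omega)]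
    rw [this, smul_zero, zero_add]
  -- Step C : Eser * G₀ = 1 - (1 - Eser)^(n+1)
  have hEG : Eser * G₀ + (1 - Eser)^(n+1) = 1 := by
    have hp : (1 - Eser)^(n+1)
        = ∑ j ∈ range (n+2), (-Eser)^j * 1^((n+1)-j) * ((n+1).choose j : ℚ⟦X⟧) := by
      rw [show (1 : ℚ⟦X⟧) - Eser = (-Eser) + 1 by ring, add_pow]
    rw [hp, Finset.sum_range_succ', hG0def, Finset.mul_sum]
    have h0 : ((-Eser)^0 * 1^((n+1)-0) * ((n+1).choose 0 : ℚ⟦X⟧)) = 1 := by simp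
    rw [h0]
    have hterm : ∀ i ∈ range (n+1),
        Eser * (c i • Eser ^ i) + (-Eser)^(i+1) * 1^((n+1)-(i+1)) * ((n+1).choose (i+1) : ℚ⟦X⟧)
          = 0 := by
      intro i _
      rw [PowerSeries.smul_eq_C_mul, hc]
      rw [show (((n+1).choose (i+1) : ℕ) : ℚ⟦X⟧)
          = PowerSeries.C (((n+1).choose (i+1) : ℕ) : ℚ) from (map_natCast _ _).symm]
      rw [map_mul, map_pow, map_neg, map_one, neg_pow Eser (i+1), pow_succ (-1 : ℚ⟦X⟧) i]
      ring
    have hsum0 : ∑ i ∈ range (n+1), Eser * (c i • Eser ^ i)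
        + ∑ i ∈ range (n+1), (-Eser)^(i+1) * 1^((n+1)-(i+1)) * ((n+1).choose (i+1) : ℚ⟦X⟧) = 0 := by
      rw [← Finset.sum_add_distrib, Finset.sum_congr rfl hterm, Finset.sum_const_zero]
    linear_combination hsum0
  -- Step D : coeff n G₀ = bernoulli n / n!
  have hG0B : G₀ = bernoulliPowerSeries ℚ * (1 - (1 - Eser)^(n+1)) := by
    calc G₀ = (bernoulliPowerSeries ℚ * Eser) * G₀ := by rw [B_mul_E, one_mul]
      _ = bernoulliPowerSeries ℚ * (Eser * G₀) := by ring
      _ = _ := by rw [eq_sub_of_add_eq hEG]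
  have hconst : PowerSeries.constantCoeff (1 - Eser) = 0 := by
    simp [Eser]
  have hdvd : (PowerSeries.X : ℚ⟦X⟧)^(n+1) ∣ bernoulliPowerSeries ℚ * (1 - Eser)^(n+1) :=
    Dvd.dvd.mul_left (pow_dvd_pow_of_dvd (PowerSeries.X_dvd_iff.2 hconst) (n+1)) _
  have hz : PowerSeries.coeff n ((bernoulliPowerSeries ℚ) * (1 - Eser)^(n+1)) = 0 :=
    PowerSeries.X_pow_dvd_iff.1 hdvd n (Nat.lt_succ_self n)
  have hcoeffB : PowerSeries.coeff n (bernoulliPowerSeries ℚ) = bernoulli n / (n.factorial : ℚ) := by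
    rw [bernoulliPowerSeries, PowerSeries.coeff_mk]
    simp [Algebra.algebraMap_self]
  have hcoeffG0 : PowerSeries.coeff n G₀ = bernoulli n / (n.factorial : ℚ) := by
    rw [hG0B, mul_sub, mul_one, map_sub, hz, sub_zero, hcoeffB]
  have hB0 : bernoulli n = 0 := by
    rw [bernoulli_eq_bernoulli'_of_ne_one (by omega), bernoulli'_eq_zero_of_odd hn (by omega)]
  rw [← hGG0, hcoeffG0, hB0]
  simp
end
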